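/- Let X=(V,E,T) be a 2-dimensional simplicial complex in which every edge is contained in exactly k₁ triangles, k₁ ≥ 1. Then the smallest normalized adjacency eigenvalue of the edge-graph G₁(X), which is a 2k₁-regular graph, satisfies λ̃ₙ(G₁(X)) ≥ −17/18. -/

import Mathlib

open Finset

/-- Symmetric-difference distance between two finite sets. -/
def sdist {α : Type} [DecidableEq α] (A B : Finset α) : ℕ :=
  (A \ B).card + (B \ A).card

/-- Distance from a finite set to a family of finite sets. -/
noncomputable def famDist {α : Type} [DecidableEq α] (A : Finset α) (Z : Set (Finset α)) : ℕ :=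
  sInf {d | ∃ z ∈ Z, sdist A z = d}

/-- `E` and `T` form the edges and triangles of a 2-dimensional simplicial complex on `V`. -/
def IsComplex {V : Type} [DecidableEq V] (E T : Finset (Finset V)) : Prop :=
  (∀ e ∈ E, e.card = 2) ∧ (∀ t ∈ T, t.card = 3) ∧
    ∀ t ∈ T, ∀ e, e ⊆ t → e.card = 2 → e ∈ E

/-- The complex is `(k₀, k₁)`-regular. -/
def IsRegularComplex {V : Type} [Fintype V] [DecidableEq V]
    (E T : Finset (Finset V)) (k₀ k₁ : ℕ) : Prop :=
  (∀ v : V, (E.filter (fun e => v ∈ e)).card = k₀) ∧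
    ∀ e ∈ E, (T.filter (fun t => e ⊆ t)).card = k₁

/-- Coboundary of a set of vertices: edges with exactly one endpoint in `S`. -/
def delta0 {V : Type} [DecidableEq V] (E : Finset (Finset V)) (S : Finset V) :
    Finset (Finset V) :=
  E.filter (fun e => (e ∩ S).card = 1)

/-- Coboundary of a set of edges: triangles containing an odd number of edges of `F`. -/
def delta1 {V : Type} [DecidableEq V] (T F : Finset (Finset V)) : Finset (Finset V) :=
  T.filter (fun t => Odd ((F.filter (fun e => e ⊆ t)).card))

/-- Local view of a vertex `v` with regard to a set of edges `F`. -/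
def localView {V : Type} [DecidableEq V] (F : Finset (Finset V)) (v : V) :
    Finset (Finset V) :=
  F.filter (fun e => v ∈ e)

/-- The 0-cocycles. -/
def Z0 {V : Type} [DecidableEq V] (E : Finset (Finset V)) : Set (Finset V) :=
  {S | delta0 E S = ∅}

/-- The 1-coboundaries: coboundaries of vertex sets (cuts). -/
def B1 {V : Type} [Fintype V] [DecidableEq V] (E : Finset (Finset V)) :
    Set (Finset (Finset V)) :=
  {B | ∃ S : Finset V, B = delta0 E S}

/-- The 1-cocycles: sets of edges with empty coboundary. -/
def Z1 {V : Type} [DecidableEq V] (E T : Finset (Finset V)) : Set (Finset (Finset V)) :=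
  {F | F ⊆ E ∧ delta1 T F = ∅}

/-- `(ε, μ)`-cosystolic expansion of a `(k₀, k₁)`-regular 2-dimensional complex. -/
def IsCosystolicExpander {V : Type} [Fintype V] [DecidableEq V]
    (E T : Finset (Finset V)) (k₀ k₁ : ℕ) (ε μ : ℝ) : Prop :=
  (∀ S : Finset V,
      (delta0 E S = ∅ →
        S = ∅ ∨ S = Finset.univ ∨ μ * (Fintype.card V : ℝ) ≤ (S.card : ℝ)) ∧
      (delta0 E S ≠ ∅ →
        ε * (k₀ : ℝ) * (famDist S (Z0 E) : ℝ) ≤ ((delta0 E S).card : ℝ))) ∧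
  (∀ F : Finset (Finset V), F ⊆ E →
      (delta1 T F = ∅ → F ∈ B1 E ∨ μ * (E.card : ℝ) ≤ (F.card : ℝ)) ∧
      (delta1 T F ≠ ∅ →
        ε * (k₁ : ℝ) * (famDist F (Z1 E T) : ℝ) ≤ ((delta1 T F).card : ℝ)))

/-- The underlying graph `G₀(X)` of the complex. -/
def G0 {V : Type} [DecidableEq V] (E : Finset (Finset V)) : SimpleGraph V where
  Adj u v := u ≠ v ∧ ({u, v} : Finset V) ∈ E
  symm := ⟨fun u v h => ⟨h.1.symm, by rw [Finset.pair_comm]; exact h.2⟩⟩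
  loopless := ⟨fun v h => h.1 rfl⟩

instance {V : Type} [DecidableEq V] (E : Finset (Finset V)) : DecidableRel (G0 E).Adj :=
  fun _ _ => inferInstanceAs (Decidable (_ ∧ _))

/-- The edge-graph `G₁(X)` of the complex: vertices are the edges of `X`, two edges
adjacent iff their union is a triangle. -/
def EdgeGraph {V : Type} [DecidableEq V] (E T : Finset (Finset V)) :
    SimpleGraph {e // e ∈ E} where
  Adj e f := e ≠ f ∧ (e.val ∪ f.val) ∈ T
  symm := ⟨fun e f h => ⟨h.1.symm, by rw [Finset.union_comm]; exact h.2⟩⟩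
  loopless := ⟨fun e h => h.1 rfl⟩

instance {V : Type} [DecidableEq V] (E T : Finset (Finset V)) :
    DecidableRel (EdgeGraph E T).Adj :=
  fun _ _ => inferInstanceAs (Decidable (_ ∧ _))

lemma adjMatrix_isHermitian {α : Type} [Fintype α] (G : SimpleGraph α)
    [DecidableRel G.Adj] : (SimpleGraph.adjMatrix ℝ G).IsHermitian := by
  refine Matrix.IsHermitian.ext fun i j => ?_
  simp [SimpleGraph.adjMatrix_apply, SimpleGraph.adj_comm]

/-- The eigenvalues of the adjacency matrix of `G`, sorted in ascending order. -/
noncomputable def eigsAsc {α : Type} [Fintype α] [DecidableEq α] (G : SimpleGraph α)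
    [DecidableRel G.Adj] : List ℝ :=
  Multiset.sort
    ((Finset.univ : Finset α).val.map (adjMatrix_isHermitian G).eigenvalues) (· ≤ ·)

/-- The normalized `i`-th largest adjacency eigenvalue (1-indexed) of a `k`-regular
graph `G`: `λ̃ᵢ = λᵢ / k`. -/
noncomputable def normEig {α : Type} [Fintype α] [DecidableEq α] (G : SimpleGraph α)
    [DecidableRel G.Adj] (k i : ℕ) : ℝ :=
  (eigsAsc G).getD (Fintype.card α - i) 0 / (k : ℝ)

/-- The number of edges of `G` with exactly one endpoint in `S` (counted via the
ordered pairs `(u, v)` with `u ∈ S`, `v ∉ S`, `u ~ v`). -/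
def cutEdges {α : Type} [Fintype α] [DecidableEq α] (G : SimpleGraph α)
    [DecidableRel G.Adj] (S : Finset α) : ℕ :=
  ((S ×ˢ Sᶜ).filter fun p => G.Adj p.1 p.2).card

/-- The normalized Cheeger constant of a `k`-regular graph. -/
noncomputable def normCheeger {α : Type} [Fintype α] [DecidableEq α] (G : SimpleGraph α)
    [DecidableRel G.Adj] (k : ℕ) : ℝ :=
  sInf {x : ℝ | ∃ S : Finset α, 0 < S.card ∧ (S.card : ℝ) ≤ (Fintype.card α : ℝ) / 2 ∧
    x = (cutEdges G S : ℝ) / ((k : ℝ) * (S.card : ℝ))}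

/-- The random walk on the `d`-regular graph `G` is `a`-rapidly mixing: from any initial
distribution, after `i` steps of the walk (with transition matrix `(1/d) • A(G)`),
the ℓ₂ distance to the uniform distribution is at most `a ^ i`. -/
def WalkRapidMixing {α : Type} [Fintype α] [DecidableEq α] (G : SimpleGraph α)
    [DecidableRel G.Adj] (d : ℕ) (a : ℝ) : Prop :=
  ∀ p₀ : α → ℝ, (∀ x, 0 ≤ p₀ x) → (∑ x, p₀ x = 1) → ∀ i : ℕ,
    Real.sqrt (∑ x, ((((d : ℝ)⁻¹ • SimpleGraph.adjMatrix ℝ G) ^ i).mulVec p₀ x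
      - (Fintype.card α : ℝ)⁻¹) ^ 2) ≤ a ^ i


open Matrix in
lemma triCount {V : Type} [DecidableEq V] (E T : Finset (Finset V))
    (hX : IsComplex E T)
    {e f : Finset V} (he : e ∈ E) (hf : f ∈ E) (hef : e ≠ f) :
    (T.filter (fun t => e ⊆ t ∧ f ⊆ t)).card = if e ∪ f ∈ T then 1 else 0 := by
  have hce : e.card = 2 := hX.1 e he
  have hcf : f.card = 2 := hX.1 f hf
  have hcu : 3 ≤ (e ∪ f).card := by
    by_contra h
    push_neg at h
    have h1 : (e ∪ f).card ≤ 2 := by omega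
    have : e = f := by
      have he' : e ⊆ e ∪ f := subset_union_left
      have hf' : f ⊆ e ∪ f := subset_union_right
      have h2 : e = e ∪ f := eq_of_subset_of_card_le he' (by omega)
      have h3 : f = e ∪ f := eq_of_subset_of_card_le hf' (by omega)
      exact h2.trans h3.symm
    exact hef this
  have key : ∀ t ∈ T, (e ⊆ t ∧ f ⊆ t) → t = e ∪ f := by
    intro t ht ⟨h1, h2⟩
    have : e ∪ f ⊆ t := union_subset h1 h2
    exact (eq_of_subset_of_card_le this (by rw [hX.2.1 t ht]; exact hcu)).symm
  split_ifs with h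
  · rw [Finset.card_eq_one]
    refine ⟨e ∪ f, ?_⟩
    ext t
    simp only [mem_filter, mem_singleton]
    constructor
    · rintro ⟨ht, hs1, hs2⟩; exact key t ht ⟨hs1, hs2⟩
    · rintro rfl; exact ⟨h, subset_union_left, subset_union_right⟩
  · rw [Finset.card_eq_zero]
    ext t
    simp only [mem_filter, notMem_empty, iff_false, not_and]
    intro ht hs1 hs2
    exact h (key t ht ⟨hs1, hs2⟩ ▸ ht)

open Matrix in
lemma entry_eq {V : Type} [DecidableEq V] (E T : Finset (Finset V)) (k₁ : ℕ)
    (hX : IsComplex E T)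
    (hreg : ∀ e ∈ E, (T.filter (fun t => e ⊆ t)).card = k₁)
    (e f : {e // e ∈ E}) :
    (SimpleGraph.adjMatrix ℝ (EdgeGraph E T) + (k₁ : ℝ) • 1) e f
      = ∑ t ∈ T, (if e.val ⊆ t then (1:ℝ) else 0) * (if f.val ⊆ t then (1:ℝ) else 0) := by
  have hsum : ∑ t ∈ T, (if e.val ⊆ t then (1:ℝ) else 0) * (if f.val ⊆ t then (1:ℝ) else 0)
      = ((T.filter (fun t => e.val ⊆ t ∧ f.val ⊆ t)).card : ℝ) := by
    rw [← Finset.sum_boole]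
    refine Finset.sum_congr rfl fun t _ => ?_
    split_ifs with h1 h2 h3 <;> simp_all
  rw [hsum]
  by_cases hef : e = f
  · subst hef
    have : (T.filter (fun t => e.val ⊆ t ∧ e.val ⊆ t)) = T.filter (fun t => e.val ⊆ t) := by
      simp
    rw [this, hreg e.val e.prop]
    simp [Matrix.add_apply, Matrix.smul_apply, Matrix.one_apply]
  · have hv : e.val ≠ f.val := fun h => hef (Subtype.ext h)
    rw [triCount E T hX e.prop f.prop hv]
    simp only [Matrix.add_apply, Matrix.smul_apply, Matrix.one_apply, if_neg hef,
      SimpleGraph.adjMatrix_apply]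
    have : (EdgeGraph E T).Adj e f ↔ (e.val ∪ f.val) ∈ T := by
      constructor
      · exact fun h => h.2
      · exact fun h => ⟨hef, h⟩
    split_ifs with h1 h2 h3 <;> simp_all

open Matrix in
lemma quadForm {V : Type} [DecidableEq V] (E T : Finset (Finset V)) (k₁ : ℕ)
    (hX : IsComplex E T)
    (hreg : ∀ e ∈ E, (T.filter (fun t => e ⊆ t)).card = k₁)
    (v : {e // e ∈ E} → ℝ) :
    0 ≤ v ⬝ᵥ ((SimpleGraph.adjMatrix ℝ (EdgeGraph E T) + (k₁ : ℝ) • 1) *ᵥ v) := by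
  set B := SimpleGraph.adjMatrix ℝ (EdgeGraph E T) + (k₁ : ℝ) • 1 with hB
  have : v ⬝ᵥ (B *ᵥ v) = ∑ t ∈ T, (∑ e, v e * (if e.val ⊆ t then (1:ℝ) else 0)) ^ 2 := by
    calc v ⬝ᵥ (B *ᵥ v) = ∑ e, ∑ f, v e * (B e f * v f) := by
          simp [dotProduct, Matrix.mulVec, Finset.mul_sum]
      _ = ∑ e, ∑ f, ∑ t ∈ T, (v e * (if e.val ⊆ t then (1:ℝ) else 0))
            * (v f * (if f.val ⊆ t then (1:ℝ) else 0)) := by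
          refine Finset.sum_congr rfl fun e _ => Finset.sum_congr rfl fun f _ => ?_
          rw [hB, entry_eq E T k₁ hX hreg e f, Finset.sum_mul, Finset.mul_sum]
          exact Finset.sum_congr rfl fun t _ => by ring
      _ = ∑ e, ∑ t ∈ T, ∑ f, (v e * (if e.val ⊆ t then (1:ℝ) else 0))
            * (v f * (if f.val ⊆ t then (1:ℝ) else 0)) :=
          Finset.sum_congr rfl fun e _ => Finset.sum_comm
      _ = ∑ t ∈ T, ∑ e, ∑ f, (v e * (if e.val ⊆ t then (1:ℝ) else 0))
            * (v f * (if f.val ⊆ t then (1:ℝ) else 0)) := Finset.sum_comm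
      _ = ∑ t ∈ T, (∑ e, v e * (if e.val ⊆ t then (1:ℝ) else 0)) ^ 2 := by
          refine Finset.sum_congr rfl fun t _ => ?_
          rw [sq, Finset.sum_mul_sum]
  rw [this]
  exact Finset.sum_nonneg fun t _ => sq_nonneg _

open Matrix in
lemma eig_bound {V : Type} [DecidableEq V] (E T : Finset (Finset V)) (k₁ : ℕ)
    (hX : IsComplex E T)
    (hreg : ∀ e ∈ E, (T.filter (fun t => e ⊆ t)).card = k₁)
    (i : {e // e ∈ E}) :
    -(k₁ : ℝ) ≤ (adjMatrix_isHermitian (EdgeGraph E T)).eigenvalues i := by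
  set hA := adjMatrix_isHermitian (EdgeGraph E T)
  set μ := hA.eigenvalues i with hμ
  set u : {e // e ∈ E} → ℝ := ⇑(hA.eigenvectorBasis i) with hu
  have hmv : SimpleGraph.adjMatrix ℝ (EdgeGraph E T) *ᵥ u = μ • u :=
    hA.mulVec_eigenvectorBasis i
  have hnz : ∃ x, u x ≠ 0 := by
    by_contra h
    push_neg at h
    have : hA.eigenvectorBasis i = 0 := by
      ext x
      exact h x
    exact (hA.eigenvectorBasis).toBasis.ne_zero i (by simpa using this)
  obtain ⟨x₀, hx₀⟩ := hnz
  have hq := quadForm E T k₁ hX hreg u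
  have hBv : (SimpleGraph.adjMatrix ℝ (EdgeGraph E T) + (k₁ : ℝ) • 1) *ᵥ u
      = (μ + (k₁ : ℝ)) • u := by
    rw [Matrix.add_mulVec, hmv, Matrix.smul_mulVec, Matrix.one_mulVec]
    ext y
    simp [mul_add, add_mul]
    try ring
  rw [hBv] at hq
  have hdot : u ⬝ᵥ ((μ + (k₁ : ℝ)) • u) = (μ + (k₁ : ℝ)) * ∑ y, u y ^ 2 := by
    simp [dotProduct, Finset.mul_sum, Pi.smul_apply, smul_eq_mul]
    exact Finset.sum_congr rfl fun y _ => by ring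
  rw [hdot] at hq
  have hpos : 0 < ∑ y, u y ^ 2 := by
    refine Finset.sum_pos' (fun y _ => sq_nonneg _) ⟨x₀, Finset.mem_univ _, ?_⟩
    positivity
  nlinarith

theorem edgegraph_smallest_eigenvalue_bound
    {V : Type} [Fintype V] [DecidableEq V] (E T : Finset (Finset V))
    (k₁ : ℕ) (hk : 1 ≤ k₁) (hX : IsComplex E T)
    (hreg : ∀ e ∈ E, (T.filter (fun t => e ⊆ t)).card = k₁) :
    -(17 / 18 : ℝ) ≤ normEig (EdgeGraph E T) (2 * k₁) (Fintype.card {e // e ∈ E}) := by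
  rw [normEig, Nat.sub_self]
  have hk2 : (0:ℝ) < ((2 * k₁ : ℕ) : ℝ) := by
    have : 0 < 2 * k₁ := by omega
    exact_mod_cast this
  cases hL : eigsAsc (EdgeGraph E T) with
  | nil => simp [List.getD]; linarith
  | cons x L' =>
    have hx : x ∈ eigsAsc (EdgeGraph E T) := by rw [hL]; exact List.mem_cons_self
    rw [eigsAsc, Multiset.mem_sort] at hx
    obtain ⟨i, _, hi⟩ := Multiset.mem_map.mp hx
    have hb : -(k₁ : ℝ) ≤ x := hi ▸ eig_bound E T k₁ hX hreg i
    have hgd : (x :: L').getD 0 0 = x := rfl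
    rw [hgd]
    rw [le_div_iff₀ hk2]
    push_cast
    have hk1 : (1:ℝ) ≤ (k₁ : ℝ) := by exact_mod_cast hk
    nlinarith
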